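/- For n ≥ 1 agents with additive valuations whose item values lie in [0,1], there exists an allocation A and a payment vector p such that the pair (A, p) is envy-free, p i ≤ 1 for every agent i, the allocation A is EF1, and A is balanced: every bundle A_i has size ⌊m/n⌋ or ⌈m/n⌉. -/

import Mathlib

set_option linter.unusedSectionVars false
namespace OneDollarProof


/-- path cost of a list of agents w.r.t. edge weights `w` -/
def pcw {α : Type*} (w : α → α → ℝ) : List α → ℝ
  | [] => 0
  | [_] => 0
  | a :: b :: t => w a b + pcw w (b :: t)

variable {α : Type*} [DecidableEq α] (w w1 w2 : α → α → ℝ)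

lemma pcw_nil : pcw w [] = 0 := rfl
lemma pcw_single (a : α) : pcw w [a] = 0 := rfl
lemma pcw_cons_cons (a b : α) (t : List α) :
    pcw w (a :: b :: t) = w a b + pcw w (b :: t) := rfl

lemma pcw_add : ∀ l : List α, pcw (fun i k => w1 i k + w2 i k) l = pcw w1 l + pcw w2 l
  | [] => by simp [pcw_nil]
  | [a] => by simp [pcw_single]
  | a :: b :: t => by
      rw [pcw_cons_cons, pcw_cons_cons, pcw_cons_cons, pcw_add]
      ring

lemma pcw_cons (a : α) (l : List α) (hl : l ≠ []) :
    pcw w (a :: l) = w a (l.head hl) + pcw w l := by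
  cases l with
  | nil => exact absurd rfl hl
  | cons b t => rfl

lemma pcw_append : ∀ (l1 : List α) (hl1 : l1 ≠ []) (l2 : List α) (hl2 : l2 ≠ []),
    pcw w (l1 ++ l2) = pcw w l1 + w (l1.getLast hl1) (l2.head hl2) + pcw w l2
  | [a], _, l2, hl2 => by
      simp only [List.cons_append, List.nil_append, List.getLast_singleton]
      rw [pcw_cons w a l2 hl2, pcw_single]
      ring
  | a :: b :: t, _, l2, hl2 => by
      have := pcw_append (b :: t) (by simp) l2 hl2
      simp only [List.cons_append] at this ⊢
      rw [pcw_cons_cons, this, pcw_cons_cons]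
      have hlast : (a :: b :: t).getLast (by simp) = (b :: t).getLast (by simp) := by
        simp [List.getLast_cons]
      rw [hlast]
      ring

lemma pcw_eq_sum (i₀ : α) : ∀ l : List α,
    pcw w l = ∑ s ∈ Finset.range (l.length - 1), w (l.getD s i₀) (l.getD (s + 1) i₀)
  | [] => by simp [pcw_nil]
  | [a] => by simp [pcw_single]
  | a :: b :: t => by
      rw [pcw_cons_cons, pcw_eq_sum i₀ (b :: t)]
      have hlen : (a :: b :: t).length - 1 = (b :: t).length - 1 + 1 := by simp
      rw [hlen, Finset.sum_range_succ']
      simp only [List.getD_cons_succ]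
      rw [add_comm]
      simp [List.getD]

lemma list_sum_eq_range (i₀ : α) (G : α → ℝ) : ∀ (l : List α), l.Nodup →
    ∑ x ∈ l.toFinset, G x = ∑ s ∈ Finset.range l.length, G (l.getD s i₀)
  | [], _ => by simp
  | a :: t, h => by
      have ha : a ∉ t := by simp at h; exact h.1
      have ht : t.Nodup := by simp at h; exact h.2
      rw [List.toFinset_cons, Finset.sum_insert (by simpa using ha)]
      rw [list_sum_eq_range i₀ G t ht]
      simp only [List.length_cons]
      rw [Finset.sum_range_succ']
      simp only [List.getD_cons_succ]
      rw [add_comm]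
      simp [List.getD]


section Matching

variable {n m : ℕ} (v : Fin n → Fin m → ℝ)

/-- value of an optional item to agent i -/
def oval (i : Fin n) : Option (Fin m) → ℝ
  | none => 0
  | some j => v i j

lemma oval_nonneg (hv0 : ∀ i j, 0 ≤ v i j) (i : Fin n) (o : Option (Fin m)) :
    0 ≤ oval v i o := by
  cases o with
  | none => exact le_refl 0
  | some j => exact hv0 i j

lemma oval_le_one (hv1 : ∀ i j, v i j ≤ 1) (i : Fin n) (o : Option (Fin m)) :
    oval v i o ≤ 1 := by
  cases o with
  | none => exact zero_le_one
  | some j => exact hv1 i j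

/-- total weight of a partial matching -/
def wt (f : Fin n → Option (Fin m)) : ℝ := ∑ i, oval v i (f i)

/-- valid partial matching into M -/
def Valid (M : Finset (Fin m)) (f : Fin n → Option (Fin m)) : Prop :=
  (∀ i j, f i = some j → j ∈ M) ∧ ∀ i i' j, f i = some j → f i' = some j → i = i'

/-- number of matched agents -/
def msize (f : Fin n → Option (Fin m)) : ℕ :=
  (Finset.univ.filter fun i => (f i).isSome).card

/-- set of matched items -/
def img (f : Fin n → Option (Fin m)) : Finset (Fin m) :=
  Finset.univ.biUnion fun i => (f i).toFinset

lemma mem_img {f : Fin n → Option (Fin m)} {j : Fin m} :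
    j ∈ img f ↔ ∃ i, f i = some j := by
  simp [img, Option.mem_toFinset, eq_comm, Option.mem_def]

lemma img_subset {M : Finset (Fin m)} {f : Fin n → Option (Fin m)} (hf : Valid M f) :
    img f ⊆ M := by
  intro j hj
  obtain ⟨i, hi⟩ := mem_img.1 hj
  exact hf.1 i j hi

lemma card_img {M : Finset (Fin m)} {f : Fin n → Option (Fin m)} (hf : Valid M f) :
    (img f).card = msize f := by
  rw [img, Finset.card_biUnion]
  · rw [msize, Finset.card_filter]
    refine Finset.sum_congr rfl fun i _ => ?_
    cases h : f i <;> simp [h]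
  · intro i _ i' _ hne
    simp only [Finset.disjoint_left]
    intro j hj hj'
    simp only [Option.mem_toFinset, Option.mem_def] at hj hj'
    exact hne (hf.2 i i' j hj hj')

lemma msize_le_card {M : Finset (Fin m)} {f : Fin n → Option (Fin m)} (hf : Valid M f) :
    msize f ≤ M.card := by
  rw [← card_img hf]; exact Finset.card_le_card (img_subset hf)

lemma msize_le_n (f : Fin n → Option (Fin m)) : msize f ≤ n := by
  simpa [msize] using (Finset.card_filter_le Finset.univ fun i => (f i).isSome)

/-- one-step extension of a partial matching -/
lemma grow (hv0 : ∀ i j, 0 ≤ v i j) (M : Finset (Fin m)) (k : ℕ) (hkn : k ≤ n)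
    (hkM : k ≤ M.card) :
    ∀ (d : ℕ) (h : Fin n → Option (Fin m)), Valid M h → msize h + d = k →
    ∃ h', Valid M h' ∧ msize h' = k ∧ wt v h ≤ wt v h' := by
  intro d
  induction d with
  | zero => intro h hval hsz; exact ⟨h, hval, by omega, le_refl _⟩
  | succ d ih =>
    intro h hval hsz
    -- find an unmatched agent
    have hlt : msize h < n := by omega
    have : (Finset.univ.filter fun i => (h i).isSome) ≠ Finset.univ := by
      intro hEq
      rw [msize, hEq, Finset.card_univ, Fintype.card_fin] at hlt
      omega
    obtain ⟨i0, hi0u, hi0⟩ : ∃ i0, i0 ∈ Finset.univ ∧ (h i0).isSome = false := by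
      by_contra hc
      push_neg at hc
      exact this (Finset.eq_univ_iff_forall.2 fun i => by
        simp only [Finset.mem_filter, Finset.mem_univ, true_and]
        have := hc i (Finset.mem_univ i)
        exact Bool.not_eq_false _ |>.mp (by simpa using this))
    have hi0none : h i0 = none := Option.not_isSome_iff_eq_none.1 (by simp [hi0])
    -- find an unmatched item
    have hcard : (img h).card < M.card := by
      rw [card_img hval]; omega
    obtain ⟨j0, hj0M, hj0⟩ : ∃ j0, j0 ∈ M ∧ j0 ∉ img h := by
      have : ¬ M ⊆ img h := fun hsub => absurd (Finset.card_le_card hsub) (by omega)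
      obtain ⟨j0, hj⟩ := Finset.not_subset.1 this
      exact ⟨j0, hj.1, hj.2⟩
    set h' := Function.update h i0 (some j0) with hh'
    have hval' : Valid M h' := by
      constructor
      · intro i j hij
        by_cases hii : i = i0
        · subst hii; rw [hh', Function.update_self] at hij
          rw [← Option.some_inj.1 hij]; exact hj0M
        · rw [hh', Function.update_of_ne hii] at hij; exact hval.1 i j hij
      · intro i i' j hi hi'
        by_cases hii : i = i0 <;> by_cases hii' : i' = i0
        · rw [hii, hii']
        · exfalso; subst hii
          rw [hh', Function.update_self] at hi
          rw [hh', Function.update_of_ne hii'] at hi'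
          exact hj0 (mem_img.2 ⟨i', by rw [hi']; rw [← hi]⟩)
        · exfalso; subst hii'
          rw [hh', Function.update_self] at hi'
          rw [hh', Function.update_of_ne hii] at hi
          exact hj0 (mem_img.2 ⟨i, by rw [hi, hi']⟩)
        · rw [hh', Function.update_of_ne hii] at hi
          rw [hh', Function.update_of_ne hii'] at hi'
          exact hval.2 i i' j hi hi'
    have hsz' : msize h' = msize h + 1 := by
      rw [msize, msize]
      have : (Finset.univ.filter fun i => (h' i).isSome) =
          insert i0 (Finset.univ.filter fun i => (h i).isSome) := by
        ext x
        by_cases hx : x = i0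
        · subst hx; simp [hh', Function.update_self]
        · simp [hh', Function.update_of_ne hx, hx]
      rw [this, Finset.card_insert_of_notMem (by simp [hi0])]
    have hwt : wt v h ≤ wt v h' := by
      rw [wt, wt]
      have : ∀ i, oval v i (h i) ≤ oval v i (h' i) := by
        intro i
        by_cases hx : i = i0
        · subst hx; rw [hh', Function.update_self, hi0none]
          exact oval_nonneg v hv0 _ _
        · rw [hh', Function.update_of_ne hx]
      exact Finset.sum_le_sum fun i _ => this i
    obtain ⟨h'', a, b, c⟩ := ih h' hval' (by omega)
    exact ⟨h'', a, b, le_trans hwt c⟩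

/-- existence of a maximum-weight matching of full size dominating all valid matchings -/
lemma exists_opt (hv0 : ∀ i j, 0 ≤ v i j) (M : Finset (Fin m)) :
    ∃ f, Valid M f ∧ msize f = min n M.card ∧
      ∀ h, Valid M h → wt v h ≤ wt v f := by
  classical
  set k := min n M.card with hk
  have hkn : k ≤ n := min_le_left _ _
  have hkM : k ≤ M.card := min_le_right _ _
  have hempty : Valid M (fun _ : Fin n => (none : Option (Fin m))) :=
    ⟨fun i j h => by simp at h, fun i i' j h1 h2 => by simp at h1⟩
  have hsz0 : msize (fun _ : Fin n => (none : Option (Fin m))) = 0 := by simp [msize]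
  obtain ⟨h0, h0v, h0s, -⟩ := grow v hv0 M k hkn hkM k _ hempty (by omega)
  -- maximize over the finite set of valid size-k matchings
  set S : Set (Fin n → Option (Fin m)) := {g | Valid M g ∧ msize g = k} with hS
  have hfin : S.Finite := Set.toFinite S
  have hne : (hfin.toFinset).Nonempty := ⟨h0, by simp [hS, Set.Finite.mem_toFinset]; exact ⟨h0v, h0s⟩⟩
  obtain ⟨f, hfS, hfmax⟩ := Finset.exists_max_image hfin.toFinset (wt v) hne
  rw [Set.Finite.mem_toFinset] at hfS
  refine ⟨f, hfS.1, hfS.2, fun h hval => ?_⟩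
  obtain ⟨h', h'v, h's, hwle⟩ := grow v hv0 M k hkn hkM (k - msize h) h hval
    (by have h1 := msize_le_n h; have h2 := msize_le_card hval; omega)
  refine le_trans hwle (hfmax h' ?_)
  rw [Set.Finite.mem_toFinset]
  exact ⟨h'v, h's⟩

/-- the shifted alternative matching along a list of agents -/
def alt (i₀ : Fin n) (f : Fin n → Option (Fin m)) (l : List (Fin n)) (o : Option (Fin m)) :
    Fin n → Option (Fin m) :=
  fun x => if x ∈ l then
      (if l.idxOf x + 1 = l.length then o else f (l.getD (l.idxOf x + 1) i₀))
    else f x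

/-- Key exchange lemma: shifting bundles along a path cannot beat the optimal matching. -/
lemma shift_bound {M : Finset (Fin m)} {f : Fin n → Option (Fin m)}
    (hf : Valid M f) (hopt : ∀ h, Valid M h → wt v h ≤ wt v f)
    (l : List (Fin n)) (hl : l ≠ []) (hnd : l.Nodup) (o : Option (Fin m))
    (ho : ∀ j, o = some j → j ∈ M ∧ ∀ y, f y = some j → y = l.head hl) :
    pcw (fun i k => oval v i (f k) - oval v i (f i)) l ≤
      oval v (l.getLast hl) (f (l.getLast hl)) - oval v (l.getLast hl) o := by
  classical
  set i₀ := l.head hl with hi₀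
  set ℓ := l.length with hℓdef
  have hℓ : 1 ≤ ℓ := by
    rw [hℓdef]; exact List.length_pos_iff.2 hl
  set g := alt i₀ f l o with hg
  have hidx : ∀ x ∈ l, l.idxOf x < ℓ := fun x hx => List.idxOf_lt_length_iff.2 hx
  have hgetidx : ∀ x (hx : x ∈ l), l.getD (l.idxOf x) i₀ = x := by
    intro x hx
    rw [List.getD_eq_getElem _ _ (hidx x hx)]
    exact List.getElem_idxOf (hidx x hx)
  have hidxget : ∀ s (hs : s < ℓ), l.idxOf (l.getD s i₀) = s := by
    intro s hs
    rw [List.getD_eq_getElem _ _ hs]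
    exact hnd.idxOf_getElem s hs
  have hmemget : ∀ s (hs : s < ℓ), l.getD s i₀ ∈ l := by
    intro s hs
    rw [List.getD_eq_getElem _ _ hs]
    exact List.getElem_mem _
  have hinj : ∀ x x', x ∈ l → x' ∈ l → l.idxOf x = l.idxOf x' → x = x' := by
    intro x x' hx hx' he
    rw [← hgetidx x hx, ← hgetidx x' hx', he]
  have hhead : l.getD 0 i₀ = i₀ := by
    rw [hi₀]
    cases l with
    | nil => exact absurd rfl hl
    | cons a t => rfl
  have hlast : l.getD (ℓ - 1) i₀ = l.getLast hl := by
    have hlt : ℓ - 1 < ℓ := by omega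
    rw [List.getD_eq_getElem _ _ hlt, List.getLast_eq_getElem]
  -- membership of g values in M
  have hgval : Valid M g := by
    constructor
    · intro x j hxj
      rw [hg, alt] at hxj
      by_cases hx : x ∈ l
      · rw [if_pos hx] at hxj
        by_cases hlastx : l.idxOf x + 1 = ℓ
        · rw [if_pos hlastx] at hxj
          exact (ho j hxj).1
        · rw [if_neg hlastx] at hxj
          exact hf.1 _ j hxj
      · rw [if_neg hx] at hxj
        exact hf.1 _ j hxj
    · intro x x' j hx hx'
      -- characterize g values
      have main : ∀ y, y ∈ l → g y = some j →
          (l.idxOf y + 1 = ℓ ∧ o = some j) ∨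
          (l.idxOf y + 1 < ℓ ∧ f (l.getD (l.idxOf y + 1) i₀) = some j) := by
        intro y hy hyj
        rw [hg, alt, if_pos hy] at hyj
        by_cases hly : l.idxOf y + 1 = ℓ
        · left; rw [if_pos hly] at hyj; exact ⟨hly, hyj⟩
        · right; rw [if_neg hly] at hyj
          exact ⟨by have := hidx y hy; omega, hyj⟩
      have off : ∀ y, y ∉ l → g y = f y := by
        intro y hy; rw [hg, alt, if_neg hy]
      by_cases hxl : x ∈ l <;> by_cases hx'l : x' ∈ l
      · rcases main x hxl hx with ⟨h1, h2⟩ | ⟨h1, h2⟩ <;>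
          rcases main x' hx'l hx' with ⟨h1', h2'⟩ | ⟨h1', h2'⟩
        · exact hinj x x' hxl hx'l (by omega)
        · exfalso
          have hy := (ho j h2).2 _ h2'
          have : l.idxOf (l.getD (l.idxOf x' + 1) i₀) = l.idxOf x' + 1 :=
            hidxget _ h1'
          rw [hy] at this
          rw [← hhead] at this
          rw [hidxget 0 (by omega)] at this
          omega
        · exfalso
          have hy := (ho j h2').2 _ h2
          have : l.idxOf (l.getD (l.idxOf x + 1) i₀) = l.idxOf x + 1 :=
            hidxget _ h1
          rw [hy] at this
          rw [← hhead] at this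
          rw [hidxget 0 (by omega)] at this
          omega
        · have := hf.2 _ _ j h2 h2'
          have e1 : l.idxOf (l.getD (l.idxOf x + 1) i₀) = l.idxOf x + 1 := hidxget _ h1
          have e2 : l.idxOf (l.getD (l.idxOf x' + 1) i₀) = l.idxOf x' + 1 := hidxget _ h1'
          rw [this] at e1
          rw [e2] at e1
          exact hinj x x' hxl hx'l (by omega)
      · exfalso
        rw [off x' hx'l] at hx'
        rcases main x hxl hx with ⟨h1, h2⟩ | ⟨h1, h2⟩
        · have := (ho j h2).2 _ hx'
          rw [this] at hx'l
          exact hx'l (by rw [hi₀]; exact List.head_mem hl)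
        · have := hf.2 _ _ j h2 hx'
          rw [← this] at hx'l
          exact hx'l (hmemget _ h1)
      · exfalso
        rw [off x hxl] at hx
        rcases main x' hx'l hx' with ⟨h1, h2⟩ | ⟨h1, h2⟩
        · have := (ho j h2).2 _ hx
          rw [this] at hxl
          exact hxl (by rw [hi₀]; exact List.head_mem hl)
        · have := hf.2 _ _ j h2 hx
          rw [← this] at hxl
          exact hxl (hmemget _ h1)
      · rw [off x hxl] at hx
        rw [off x' hx'l] at hx'
        exact hf.2 _ _ j hx hx'
  -- weight difference computation
  have hwt : wt v g - wt v f =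
      pcw (fun i k => oval v i (f k) - oval v i (f i)) l
        + oval v (l.getLast hl) o - oval v (l.getLast hl) (f (l.getLast hl)) := by
    have h1 : wt v g - wt v f = ∑ x, (oval v x (g x) - oval v x (f x)) := by
      rw [wt, wt, Finset.sum_sub_distrib]
    have h2 : ∑ x, (oval v x (g x) - oval v x (f x)) =
        ∑ x ∈ l.toFinset, (oval v x (g x) - oval v x (f x)) := by
      symm
      apply Finset.sum_subset (Finset.subset_univ _)
      intro x _ hx
      rw [List.mem_toFinset] at hx
      rw [hg, alt, if_neg hx]
      ring
    have h3 : ∑ x ∈ l.toFinset, (oval v x (g x) - oval v x (f x)) =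
        ∑ s ∈ Finset.range ℓ, (fun x => oval v x (g x) - oval v x (f x)) (l.getD s i₀) :=
      list_sum_eq_range i₀ _ l hnd
    have hsplit : ℓ = (ℓ - 1) + 1 := by omega
    have h4 : ∑ s ∈ Finset.range ℓ, (fun x => oval v x (g x) - oval v x (f x)) (l.getD s i₀)
        = (∑ s ∈ Finset.range (ℓ - 1),
            (oval v (l.getD s i₀) (f (l.getD (s+1) i₀)) - oval v (l.getD s i₀) (f (l.getD s i₀))))
          + (oval v (l.getLast hl) o - oval v (l.getLast hl) (f (l.getLast hl))) := by
      rw [hsplit, Finset.sum_range_succ]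
      congr 1
      · apply Finset.sum_congr rfl
        intro s hs
        rw [Finset.mem_range] at hs
        have hsl : s < ℓ := by omega
        have hgx : g (l.getD s i₀) = f (l.getD (s+1) i₀) := by
          rw [hg, alt, if_pos (hmemget s hsl), hidxget s hsl, if_neg (by omega)]
        simp only [hgx]
      · have hgx : g (l.getD (ℓ-1) i₀) = o := by
          rw [hg, alt, if_pos (hmemget _ (by omega)), hidxget _ (by omega), if_pos (by omega)]
        rw [← hlast]
        show oval v _ (g _) - oval v _ (f _) = _
        rw [hgx]
    have h5 : pcw (fun i k => oval v i (f k) - oval v i (f i)) l =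
        ∑ s ∈ Finset.range (ℓ - 1),
          (oval v (l.getD s i₀) (f (l.getD (s+1) i₀)) - oval v (l.getD s i₀) (f (l.getD s i₀))) :=
      pcw_eq_sum _ i₀ l
    rw [h1, h2, h3, h4, h5]
    ring
  have hle := hopt g hgval
  have := hwt
  linarith

/-- singleton case: any available item is no better than one's own matched item -/
lemma single_bound {M : Finset (Fin m)} {f : Fin n → Option (Fin m)}
    (hf : Valid M f) (hopt : ∀ h, Valid M h → wt v h ≤ wt v f)
    (i : Fin n) (o : Option (Fin m))
    (ho : ∀ j, o = some j → j ∈ M ∧ j ∉ img f) :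
    oval v i o ≤ oval v i (f i) := by
  have := shift_bound v hf hopt [i] (by simp) (by simp) o (by
    intro j hj
    refine ⟨(ho j hj).1, fun y hy => absurd (mem_img.2 ⟨y, hy⟩) (ho j hj).2⟩)
  simp only [List.getLast_singleton, pcw_single] at this
  linarith

/-- cycle bound -/
lemma cycle_bound {M : Finset (Fin m)} {f : Fin n → Option (Fin m)}
    (hf : Valid M f) (hopt : ∀ h, Valid M h → wt v h ≤ wt v f)
    (l : List (Fin n)) (hl : l ≠ []) (hnd : l.Nodup) :
    pcw (fun i k => oval v i (f k) - oval v i (f i)) (l ++ [l.head hl]) ≤ 0 := by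
  set wf := fun i k => oval v i (f k) - oval v i (f i) with hwf
  have hb := shift_bound v hf hopt l hl hnd (f (l.head hl)) (by
    intro j hj
    exact ⟨hf.1 _ j hj, fun y hy => hf.2 _ _ j hy hj⟩)
  have happ : pcw wf (l ++ [l.head hl]) =
      pcw wf l + wf (l.getLast hl) (l.head hl) := by
    rw [pcw_append wf l hl [l.head hl] (by simp)]
    simp [pcw_single]
  rw [happ, hwf]
  simp only
  linarith

lemma pcw_eq_zero {α : Type*} [DecidableEq α] {w : α → α → ℝ} (hw : ∀ a b, w a b = 0) :
    ∀ l : List α, pcw w l = 0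
  | [] => rfl
  | [_] => rfl
  | a :: b :: t => by rw [pcw_cons_cons, hw, pcw_eq_zero hw (b :: t)]; ring

/-- Main inductive construction: iterated maximum matching. -/
lemma main_alloc (hn : 1 ≤ n) (hv0 : ∀ i j, 0 ≤ v i j) :
    ∀ (c : ℕ) (M : Finset (Fin m)), M.card ≤ c →
    ∃ (A : Fin n → Finset (Fin m)) (first : Fin n → Option (Fin m)),
      (∀ i, A i ⊆ M) ∧
      (∀ i k, i ≠ k → Disjoint (A i) (A k)) ∧
      (∀ j ∈ M, ∃ i, j ∈ A i) ∧
      (∀ i, (A i).card = M.card / n ∨ (A i).card = (M.card + n - 1) / n) ∧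
      (∀ i, first i = none → A i = ∅) ∧
      (∀ i j, first i = some j → j ∈ A i) ∧
      (∀ i k, (∑ j ∈ A k, v i j) - oval v i (first k) ≤ ∑ j ∈ A i, v i j) ∧
      (∀ (l : List (Fin n)) (hl : l ≠ []), l.Nodup →
        pcw (fun i k => (∑ j ∈ A k, v i j) - ∑ j ∈ A i, v i j) l ≤
          oval v (l.getLast hl) (first (l.getLast hl))) ∧
      (∀ (l : List (Fin n)) (hl : l ≠ []), l.Nodup →
        pcw (fun i k => (∑ j ∈ A k, v i j) - ∑ j ∈ A i, v i j) (l ++ [l.head hl]) ≤ 0) := by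
  intro c
  induction c with
  | zero =>
    intro M hM
    have hMe : M = ∅ := Finset.card_eq_zero.1 (by omega)
    refine ⟨fun _ => ∅, fun _ => none, ?_, ?_, ?_, ?_, ?_, ?_, ?_, ?_, ?_⟩
    · intro i; simp
    · intro i k _; simp
    · intro j hj; rw [hMe] at hj; simp at hj
    · intro i; left; simp [hMe]
    · intro i _; rfl
    · intro i j h; simp at h
    · intro i k; simp [oval]
    · intro l hl _
      rw [pcw_eq_zero (by intro a b; simp)]
      simp [oval]
    · intro l hl _
      rw [pcw_eq_zero (by intro a b; simp)]
  | succ c ih =>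
    intro M hM
    by_cases hMc : M.card ≤ c
    · exact ih M hMc
    have hM1 : M.card = c + 1 := by omega
    have hMpos : 1 ≤ M.card := by omega
    obtain ⟨f, hfval, hfsize, hfopt⟩ := exists_opt v hv0 M
    set k := min n M.card with hk
    have hk1 : 1 ≤ k := by
      rw [hk]; exact le_min hn hMpos
    set M' := M \ img f with hM'
    have hM'sub : M' ⊆ M := Finset.sdiff_subset
    have hM'card : M'.card = M.card - k := by
      rw [hM', Finset.card_sdiff_of_subset (img_subset hfval), card_img hfval, hfsize]
    have hM'le : M'.card ≤ c := by omega
    obtain ⟨B, firstB, hBsub, hBdisj, hBcov, hBsize, hBnone, hBsome, hBinv, hBpath, hBcyc⟩ :=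
      ih M' hM'le
    set A := fun i => B i ∪ (f i).toFinset with hA
    have hAdef : ∀ i, A i = B i ∪ (f i).toFinset := fun _ => rfl
    -- basic facts
    have hf_img : ∀ i j, f i = some j → j ∈ img f := fun i j h => mem_img.2 ⟨i, h⟩
    have hf_notB : ∀ i k j, f i = some j → j ∉ B k := by
      intro i k j h hjB
      have := hBsub k hjB
      rw [hM', Finset.mem_sdiff] at this
      exact this.2 (hf_img i j h)
    have sumA : ∀ i k, (∑ j ∈ A k, v i j) = (∑ j ∈ B k, v i j) + oval v i (f k) := by
      intro i k
      rw [hAdef k]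
      cases hfk : f k with
      | none => simp [oval]
      | some j =>
        simp only [Option.toFinset_some]
        rw [Finset.sum_union (by
          simp only [Finset.disjoint_singleton_right]
          exact hf_notB k k j hfk)]
        simp [oval]
    have hallsome_of : n ≤ M.card → ∀ i, (f i).isSome := by
      intro hcase i
      have hkn : k = n := by rw [hk]; omega
      have : (Finset.univ.filter fun i => (f i).isSome) = Finset.univ := by
        apply Finset.eq_univ_of_card
        rw [← msize]
        rw [hfsize, hkn, Fintype.card_fin]
      have hi : i ∈ Finset.univ.filter fun i => (f i).isSome := by
        rw [this]; exact Finset.mem_univ i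
      simpa using hi
    have hsmall : M.card < n → M' = ∅ := by
      intro hcase
      have hkM : k = M.card := by rw [hk]; omega
      have himg : img f = M := by
        apply Finset.eq_of_subset_of_card_le (img_subset hfval)
        rw [card_img hfval, hfsize, hkM]
      rw [hM', himg, Finset.sdiff_self]
    -- the Ho condition for shift lemmas with o drawn from M'
    have hoM' : ∀ (o : Option (Fin m)), (∀ j2, o = some j2 → j2 ∈ M') →
        ∀ j2, o = some j2 → j2 ∈ M ∧ j2 ∉ img f := by
      intro o hyp j2 hj2
      have := hyp j2 hj2
      rw [hM', Finset.mem_sdiff] at this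
      exact ⟨this.1, this.2⟩
    have hfirstB_mem : ∀ i j2, firstB i = some j2 → j2 ∈ M' := fun i j2 h =>
      hBsub i (hBsome i j2 h)
    have hsplitw : ∀ l' : List (Fin n),
        pcw (fun i k => (∑ j ∈ A k, v i j) - ∑ j ∈ A i, v i j) l' =
          pcw (fun i k => (∑ j ∈ B k, v i j) - ∑ j ∈ B i, v i j) l' +
          pcw (fun i k => oval v i (f k) - oval v i (f i)) l' := by
      intro l'
      have hfe : (fun i k => (∑ j ∈ A k, v i j) - ∑ j ∈ A i, v i j) =
          (fun i k => ((∑ j ∈ B k, v i j) - ∑ j ∈ B i, v i j) +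
            (oval v i (f k) - oval v i (f i))) := by
        funext i k
        rw [sumA i k, sumA i i]
        ring
      rw [hfe]
      exact pcw_add _ _ l'
    refine ⟨A, f, ?_, ?_, ?_, ?_, ?_, ?_, ?_, ?_, ?_⟩
    · -- subsets
      intro i
      rw [hAdef i]
      apply Finset.union_subset
      · exact (hBsub i).trans hM'sub
      · intro j hj
        simp only [Option.mem_toFinset, Option.mem_def] at hj
        exact hfval.1 i j hj
    · -- disjoint
      intro i k hik
      rw [hAdef i, hAdef k] at *
      rw [Finset.disjoint_left]
      intro j hj hj'
      simp only [Finset.mem_union, Option.mem_toFinset, Option.mem_def] at hj hj'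
      rcases hj with hj | hj <;> rcases hj' with hj' | hj'
      · exact (Finset.disjoint_left.1 (hBdisj i k hik) hj) hj'
      · exact hf_notB k i j hj' hj
      · exact hf_notB i k j hj hj'
      · exact hik (hfval.2 i k j hj hj')
    · -- coverage
      intro j hj
      by_cases hji : j ∈ img f
      · obtain ⟨i, hi⟩ := mem_img.1 hji
        exact ⟨i, by rw [hAdef i]; simp [hi]⟩
      · have : j ∈ M' := by rw [hM', Finset.mem_sdiff]; exact ⟨hj, hji⟩
        obtain ⟨i, hi⟩ := hBcov j this
        exact ⟨i, by rw [hAdef i]; simp [hi]⟩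
    · -- sizes
      intro i
      by_cases hcase : n ≤ M.card
      · have hsome := hallsome_of hcase i
        obtain ⟨j, hj⟩ := Option.isSome_iff_exists.1 hsome
        have hcard : (A i).card = (B i).card + 1 := by
          rw [hAdef i]
          cases hfi : f i with
          | none => rw [hfi] at hj; simp at hj
          | some j' =>
            simp only [Option.toFinset_some]
            rw [Finset.card_union_of_disjoint (by
              simp only [Finset.disjoint_singleton_right]
              exact hf_notB i i j' hfi)]
            simp
        have hM'c : M'.card = M.card - n := by rw [hM'card, hk]; omega
        rcases hBsize i with hs | hs
        · left
          rw [hcard, hs, hM'c]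
          have hsplit : M.card = (M.card - n) + n := by omega
          conv_rhs => rw [hsplit]
          rw [Nat.add_div_right _ (by omega : 0 < n)]
        · right
          rw [hcard, hs, hM'c]
          have h1 : M.card - n + n - 1 = M.card - 1 := by omega
          have h2 : M.card + n - 1 = (M.card - 1) + n := by omega
          rw [h1, h2, Nat.add_div_right _ (by omega : 0 < n)]
      · push_neg at hcase
        have hM'e := hsmall hcase
        have hBe : ∀ i', B i' = ∅ := by
          intro i'
          have := hBsub i'
          rw [hM'e] at this
          exact Finset.subset_empty.1 this
        rw [hAdef i, hBe i, Finset.empty_union]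
        cases hfi : f i with
        | none =>
          left
          simp only [Option.toFinset_none, Finset.card_empty]
          exact (Nat.div_eq_of_lt hcase).symm
        | some j =>
          right
          simp only [Option.toFinset_some, Finset.card_singleton]
          have h2 : M.card + n - 1 = (M.card - 1) + n := by omega
          rw [h2, Nat.add_div_right _ (by omega : 0 < n),
            Nat.div_eq_of_lt (by omega : M.card - 1 < n)]
    · -- first none → empty
      intro i hfi
      have hcase : M.card < n := by
        by_contra hc
        push_neg at hc
        have := hallsome_of hc i
        rw [hfi] at this
        simp at this
      have hM'e := hsmall hcase
      have hBe : B i = ∅ := Finset.subset_empty.1 (hM'e ▸ hBsub i)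
      rw [hAdef i, hBe, hfi]
      simp
    · -- first some → mem
      intro i j hfi
      rw [hAdef i]
      simp [hfi]
    · -- INV1
      intro i k
      rw [sumA i k, sumA i i]
      have h1 := hBinv i k
      have h2 : oval v i (firstB k) ≤ oval v i (f i) :=
        single_bound v hfval hfopt i (firstB k) (hoM' _ (hfirstB_mem k))
      linarith
    · -- path bound
      intro l hl hnd
      rw [hsplitw l]
      set L := l.getLast hl with hL
      have hp1 := hBpath l hl hnd
      have hp2 : pcw (fun i k => oval v i (f k) - oval v i (f i)) l ≤
          oval v L (f L) - oval v L (firstB L) := by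
        apply shift_bound v hfval hfopt l hl hnd (firstB L)
        intro j2 hj2
        have := hoM' (firstB L) (hfirstB_mem L) j2 hj2
        exact ⟨this.1, fun y hy => absurd (mem_img.2 ⟨y, hy⟩) this.2⟩
      linarith
    · -- cycle bound
      intro l hl hnd
      rw [hsplitw (l ++ [l.head hl])]
      have h1 := hBcyc l hl hnd
      have h2 := cycle_bound v hfval hfopt l hl hnd
      linarith

end Matching
end OneDollarProof


open OneDollarProof in
/-- For n ≥ 1 agents with additive valuations whose item values lie in
[0,1], there exists an allocation A and a payment vector p such that (A, p) is
envy-free, p i ≤ 1 for every agent i, A is EF1, and A is balanced: every bundle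
has size ⌊m/n⌋ or ⌈m/n⌉. -/
theorem one_dollar_each_eliminates_envy
    (n m : ℕ) (hn : 1 ≤ n)
    (v : Fin n → Fin m → ℝ)
    (hv0 : ∀ i j, 0 ≤ v i j) (hv1 : ∀ i j, v i j ≤ 1) :
    ∃ (A : Fin n → Finset (Fin m)) (p : Fin n → ℝ),
      -- A is an allocation
      (∀ i k, i ≠ k → Disjoint (A i) (A k)) ∧
      (Finset.univ.biUnion A = Finset.univ) ∧
      -- p is a payment vector and (A, p) is envy-free
      (∀ i, 0 ≤ p i) ∧
      (∀ i k : Fin n, (∑ j ∈ A i, v i j) + p i ≥ (∑ j ∈ A k, v i j) + p k) ∧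
      -- subsidy at most one dollar per agent
      (∀ i, p i ≤ 1) ∧
      -- A is EF1
      (∀ i k : Fin n, A k = ∅ ∨
        ∃ j ∈ A k, (∑ j' ∈ A i, v i j') ≥ ∑ j' ∈ (A k).erase j, v i j') ∧
      -- A is balanced
      (∀ i, (A i).card = m / n ∨ (A i).card = (m + n - 1) / n) := by
  classical
  obtain ⟨A, first, hsub, hdisj, hcov, hsize, hnone, hsome, hinv, hpath, hcyc⟩ :=
    main_alloc v hn hv0 (Finset.univ : Finset (Fin m)).card Finset.univ le_rfl
  have hcardm : (Finset.univ : Finset (Fin m)).card = m := by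
    rw [Finset.card_univ, Fintype.card_fin]
  set w : Fin n → Fin n → ℝ := fun i k => (∑ j ∈ A k, v i j) - ∑ j ∈ A i, v i j with hw
  have hww : ∀ i k, w i k = (∑ j ∈ A k, v i j) - ∑ j ∈ A i, v i j := fun _ _ => rfl
  set S : Fin n → Set ℝ :=
    fun i => {c | ∃ l : List (Fin n), l.Nodup ∧ l.head? = some i ∧ pcw w l = c} with hS
  have hSmem : ∀ i c, c ∈ S i ↔ ∃ l : List (Fin n), l.Nodup ∧ l.head? = some i ∧ pcw w l = c :=
    fun i c => Iff.rfl
  have h0S : ∀ i, (0 : ℝ) ∈ S i := fun i => ⟨[i], by simp, rfl, rfl⟩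
  have hub : ∀ i, ∀ c ∈ S i, c ≤ 1 := by
    intro i c hc
    obtain ⟨l, hnd, hhd, hpc⟩ := hc
    have hl : l ≠ [] := by
      intro h; rw [h] at hhd; simp at hhd
    have := hpath l hl hnd
    have hov := oval_le_one v hv1 (l.getLast hl) (first (l.getLast hl))
    rw [hpc] at this
    linarith
  have hbdd : ∀ i, BddAbove (S i) := fun i => ⟨1, fun c hc => hub i c hc⟩
  set p : Fin n → ℝ := fun i => sSup (S i) with hp
  have hp0 : ∀ i, 0 ≤ p i := fun i => le_csSup (hbdd i) (h0S i)
  have hp1 : ∀ i, p i ≤ 1 := fun i => csSup_le ⟨0, h0S i⟩ (hub i)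
  have hkey : ∀ i k, p k + w i k ≤ p i := by
    intro i k
    have : sSup (S k) ≤ p i - w i k := by
      apply csSup_le ⟨0, h0S k⟩
      intro c hc
      obtain ⟨l, hnd, hhd, hpc⟩ := hc
      have hl : l ≠ [] := by intro h; rw [h] at hhd; simp at hhd
      have hhead : l.head hl = k := by
        have := List.head?_eq_head hl
        rw [hhd] at this
        exact (Option.some_inj.1 this.symm)
      have hcons : pcw w (i :: l) = w i k + c := by
        rw [pcw_cons w i l hl, hhead, hpc]
      by_cases hil : i ∈ l
      · -- decompose l = a ++ i :: t
        obtain ⟨a, t, hlat⟩ := List.append_of_mem hil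
        have hndat : (a ++ i :: t).Nodup := hlat ▸ hnd
        have hta : t.Nodup := (List.Nodup.of_append_right hndat).of_cons
        have hia : i ∉ a := by
          have hdisj' := List.disjoint_of_nodup_append hndat
          intro hia
          exact hdisj' hia List.mem_cons_self
        have hit : i ∉ t := by
          have := List.Nodup.of_append_right hndat
          exact (List.nodup_cons.1 this).1
        have hna : a.Nodup := List.Nodup.of_append_left hndat
        have hnia : (i :: a).Nodup := List.nodup_cons.2 ⟨hia, hna⟩
        have hnit : (i :: t).Nodup := List.nodup_cons.2 ⟨hit, hta⟩
        -- cycle bound on (i :: a)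
        have hcb := hcyc (i :: a) (by simp) hnia
        have hheadia : (i :: a).head (by simp) = i := rfl
        rw [hheadia] at hcb
        have hcycsplit : pcw w ((i :: a) ++ [i]) =
            pcw w (i :: a) + w ((i :: a).getLast (by simp)) i := by
          rw [pcw_append w (i :: a) (by simp) [i] (by simp)]
          simp [pcw_single]
        rw [hcycsplit] at hcb
        -- decomposition of pcw (i :: l)
        have hdecomp : pcw w (i :: l) =
            pcw w (i :: a) + w ((i :: a).getLast (by simp)) i + pcw w (i :: t) := by
          have : i :: l = (i :: a) ++ (i :: t) := by rw [hlat]; simp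
          rw [this, pcw_append w (i :: a) (by simp) (i :: t) (by simp)]
          rfl
        have hmem : pcw w (i :: t) ∈ S i := ⟨i :: t, hnit, rfl, rfl⟩
        have hle := le_csSup (hbdd i) hmem
        rw [hp]
        have : w i k + c ≤ pcw w (i :: t) := by
          rw [← hcons, hdecomp]
          linarith
        linarith
      · have hmem : pcw w (i :: l) ∈ S i := ⟨i :: l, List.nodup_cons.2 ⟨hil, hnd⟩, rfl, rfl⟩
        have hle := le_csSup (hbdd i) hmem
        rw [hcons] at hle
        rw [hp]
        linarith
    have : p k ≤ p i - w i k := this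
    linarith
  refine ⟨A, p, ?_, ?_, hp0, ?_, hp1, ?_, ?_⟩
  · exact hdisj
  · ext j
    simp only [Finset.mem_biUnion, Finset.mem_univ, true_and, iff_true]
    exact hcov j (Finset.mem_univ j)
  · intro i k
    have := hkey i k
    rw [hww] at this
    linarith
  · intro i k
    by_cases hAk : A k = ∅
    · left; exact hAk
    · right
      cases hfk : first k with
      | none => exact absurd (hnone k hfk) hAk
      | some j =>
        refine ⟨j, hsome k j hfk, ?_⟩
        have h1 := hinv i k
        rw [hfk] at h1
        have h2 : ∑ j' ∈ (A k).erase j, v i j' = (∑ j' ∈ A k, v i j') - v i j :=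
          Finset.sum_erase_eq_sub (hsome k j hfk)
        have h3 : oval v i (some j) = v i j := rfl
        rw [h3] at h1
        rw [ge_iff_le, h2]
        linarith
  · intro i
    have := hsize i
    rwa [hcardm] at this
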